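/- If {A,B} is an irreducible pair of multisets of positive integers, then |A| + |B| ≤ max(A) + max(B). -/

import Mathlib

/-- `{A,B}` is an irreducible pair: nonempty multisets of positive integers with equal
sums such that no nonempty proper submultisets `A' < A`, `B' < B` have equal sums. -/
def IrredPair (A B : Multiset ℕ) : Prop :=
  A ≠ 0 ∧ B ≠ 0 ∧ (∀ x ∈ A, 0 < x) ∧ (∀ x ∈ B, 0 < x) ∧
  A.sum = B.sum ∧
  ∀ A' B' : Multiset ℕ, A' < A → B' < B → A' ≠ 0 → B' ≠ 0 → A'.sum ≠ B'.sum

/-- `{A,B}` is a `k`-irreducible pair: irreducible and all elements are at most `k`. -/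
def KIrredPair (k : ℕ) (A B : Multiset ℕ) : Prop :=
  IrredPair A B ∧ (∀ x ∈ A, x ≤ k) ∧ (∀ x ∈ B, x ≤ k)

/-- Maximum element of a multiset of naturals (0 for the empty multiset). -/
def msetMax (S : Multiset ℕ) : ℕ := S.fold max 0

/-- A zero-sum multiset of integers is irreducible if it has no proper nonempty
zero-sum submultiset. -/
def IrredZeroSum (S : Multiset ℤ) : Prop :=
  ¬ ∃ T : Multiset ℤ, T ≤ S ∧ T ≠ 0 ∧ T ≠ S ∧ T.sum = 0

lemma le_msetMax {S : Multiset ℕ} {x : ℕ} (hx : x ∈ S) : x ≤ msetMax S := by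
  unfold msetMax
  induction S using Multiset.induction with
  | empty => simp at hx
  | cons y s ih =>
    rw [Multiset.fold_cons_left]
    rcases Multiset.mem_cons.1 hx with h | h
    · subst h; exact le_max_left _ _
    · exact le_trans (ih h) (le_max_right _ _)

lemma eq_zero_of_sum_eq_zero {S : Multiset ℕ} (hpos : ∀ x ∈ S, 0 < x) (h : S.sum = 0) :
    S = 0 := by
  rw [Multiset.sum_eq_zero_iff] at h
  by_cases h0 : S = 0
  · exact h0
  · obtain ⟨x, hx⟩ := Multiset.exists_mem_of_ne_zero h0
    exact absurd (h x hx) (hpos x hx).ne'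

lemma sum_sub_of_le {S T : Multiset ℕ} (h : T ≤ S) : (S - T).sum + T.sum = S.sum := by
  rw [← Multiset.sum_add, tsub_add_cancel_of_le h]

/-- If submultisets coincide in excess-sum and one is strictly below the other,
we contradict irreducibility. -/
lemma fresh (A B A'' B'' Av Bv : Multiset ℕ) (h : IrredPair A B)
    (hA : A'' ≤ A) (hB : B'' ≤ B) (hAv : Av ≤ A'') (hBv : Bv ≤ B'')
    (hne : Av ≠ A'' ∨ Bv ≠ B'') (hw : ¬(Av = 0 ∧ Bv = 0))
    (heq : (A''.sum : ℤ) - B''.sum = (Av.sum : ℤ) - Bv.sum) : False := by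
  obtain ⟨hA0, hB0, hApos, hBpos, hsum, hirr⟩ := h
  set A₁ := A'' - Av with hA₁
  set B₁ := B'' - Bv with hB₁
  have hsA : A₁.sum + Av.sum = A''.sum := sum_sub_of_le hAv
  have hsB : B₁.sum + Bv.sum = B''.sum := sum_sub_of_le hBv
  have heqN : A''.sum + Bv.sum = Av.sum + B''.sum := by
    have h' : (A''.sum : ℤ) + Bv.sum = Av.sum + B''.sum := by linarith
    exact_mod_cast h'
  have hsEq : A₁.sum = B₁.sum := by omega
  have hA₁le : A₁ ≤ A := le_trans (Multiset.sub_le_self _ _) hA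
  have hB₁le : B₁ ≤ B := le_trans (Multiset.sub_le_self _ _) hB
  have hA₁pos : ∀ x ∈ A₁, 0 < x := fun x hx => hApos x (Multiset.mem_of_le hA₁le hx)
  have hB₁pos : ∀ x ∈ B₁, 0 < x := fun x hx => hBpos x (Multiset.mem_of_le hB₁le hx)
  by_cases hz : A₁.sum = 0
  · -- both differences are empty, contradicting hne
    have hA₁0 : A₁ = 0 := eq_zero_of_sum_eq_zero hA₁pos hz
    have hB₁0 : B₁ = 0 := eq_zero_of_sum_eq_zero hB₁pos (by omega)
    have h1 : Av = A'' := le_antisymm hAv (tsub_eq_zero_iff_le.mp hA₁0)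
    have h2 : Bv = B'' := le_antisymm hBv (tsub_eq_zero_iff_le.mp hB₁0)
    tauto
  · have hA₁ne : A₁ ≠ 0 := fun hc => hz (by simp [hc])
    have hB₁ne : B₁ ≠ 0 := fun hc => hz (by rw [hsEq, hc]; simp)
    by_cases hAw : A₁ = A
    · -- then B₁ = B and the witness is (0,0)
      have hBsum : B₁.sum = B.sum := by rw [← hsEq, hAw, hsum]
      have hB₁B : B₁ = B := by
        have h1 : (B - B₁).sum + B₁.sum = B.sum := sum_sub_of_le hB₁le
        have h2 : B - B₁ = 0 := eq_zero_of_sum_eq_zero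
          (fun x hx => hBpos x (Multiset.mem_of_le (Multiset.sub_le_self _ _) hx)) (by omega)
        exact le_antisymm hB₁le (tsub_eq_zero_iff_le.mp h2)
      -- card arguments: Av = 0 and Bv = 0
      have hcA : Multiset.card A₁ = Multiset.card A'' - Multiset.card Av :=
        Multiset.card_sub hAv
      have hcB : Multiset.card B₁ = Multiset.card B'' - Multiset.card Bv :=
        Multiset.card_sub hBv
      have hcA'' : Multiset.card A'' ≤ Multiset.card A := Multiset.card_le_card hA
      have hcB'' : Multiset.card B'' ≤ Multiset.card B := Multiset.card_le_card hB
      have hcAv : Multiset.card Av ≤ Multiset.card A'' := Multiset.card_le_card hAv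
      have hcBv : Multiset.card Bv ≤ Multiset.card B'' := Multiset.card_le_card hBv
      have h1 : Multiset.card Av = 0 := by
        have := congrArg Multiset.card hAw; omega
      have h2 : Multiset.card Bv = 0 := by
        have := congrArg Multiset.card hB₁B; omega
      exact hw ⟨Multiset.card_eq_zero.mp h1, Multiset.card_eq_zero.mp h2⟩
    · by_cases hBw : B₁ = B
      · have hAsum : A₁.sum = A.sum := by rw [hsEq, hBw, hsum]
        have hA₁A : A₁ = A := by
          have h1 : (A - A₁).sum + A₁.sum = A.sum := sum_sub_of_le hA₁le
          have h2 : A - A₁ = 0 := eq_zero_of_sum_eq_zero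
            (fun x hx => hApos x (Multiset.mem_of_le (Multiset.sub_le_self _ _) hx)) (by omega)
          exact le_antisymm hA₁le (tsub_eq_zero_iff_le.mp h2)
        exact hAw hA₁A
      · exact hirr A₁ B₁ (lt_of_le_of_ne hA₁le hAw) (lt_of_le_of_ne hB₁le hBw)
          hA₁ne hB₁ne hsEq

lemma walk (A B : Multiset ℕ) (h : IrredPair A B) :
    ∀ n (A' B' : Multiset ℕ) (V : Finset ℤ),
      A' ≤ A → B' ≤ B →
      Multiset.card (A - A') + Multiset.card (B - B') ≤ n →
      V.card = Multiset.card A' + Multiset.card B' →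
      (∀ v ∈ V, ∃ Av Bv : Multiset ℕ, Av ≤ A' ∧ Bv ≤ B' ∧ ¬(Av = 0 ∧ Bv = 0) ∧
        (Av.sum : ℤ) - (Bv.sum : ℤ) = v) →
      (∀ v ∈ V, v ∈ Finset.Icc (1 - (msetMax B : ℤ)) (msetMax A)) →
      ((A'.sum : ℤ) - B'.sum) ∈ Finset.Icc (1 - (msetMax B : ℤ)) (msetMax A) →
      Multiset.card A + Multiset.card B ≤ msetMax A + msetMax B := by
  obtain ⟨hA0, hB0, hApos, hBpos, hsum, hirr⟩ := h
  intro n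
  induction n with
  | zero =>
    intro A' B' V hA' hB' hcard hV _ hVI _
    have h1 : A - A' = 0 := by
      rw [← Multiset.card_eq_zero]; omega
    have h2 : B - B' = 0 := by
      rw [← Multiset.card_eq_zero]; omega
    have hAe : A' = A := le_antisymm hA' (tsub_eq_zero_iff_le.mp h1)
    have hBe : B' = B := le_antisymm hB' (tsub_eq_zero_iff_le.mp h2)
    have hsub : V ⊆ Finset.Icc (1 - (msetMax B : ℤ)) (msetMax A) := fun v hv => hVI v hv
    have := Finset.card_le_card hsub
    rw [Int.card_Icc] at this
    subst hAe; subst hBe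
    omega
  | succ n ih =>
    intro A' B' V hA' hB' hcard hV hVwit hVI hdI
    by_cases hdone : A - A' = 0 ∧ B - B' = 0
    · have hAe : A' = A := le_antisymm hA' (tsub_eq_zero_iff_le.mp hdone.1)
      have hBe : B' = B := le_antisymm hB' (tsub_eq_zero_iff_le.mp hdone.2)
      have hsub : V ⊆ Finset.Icc (1 - (msetMax B : ℤ)) (msetMax A) := fun v hv => hVI v hv
      have := Finset.card_le_card hsub
      rw [Int.card_Icc] at this
      subst hAe; subst hBe
      omega
    · simp only [Finset.mem_Icc] at hdI
      by_cases hd : (A'.sum : ℤ) - B'.sum ≤ 0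
      · -- add an element of A
        have hAne : A - A' ≠ 0 := by
          intro hc
          have hAe : A' = A := le_antisymm hA' (tsub_eq_zero_iff_le.mp hc)
          -- then B'.sum ≥ B.sum so B' = B
          have hBle : B'.sum ≤ B.sum := by
            have := sum_sub_of_le hB'; omega
          have hge : (B.sum : ℤ) ≤ B'.sum := by
            rw [hAe, hsum] at hd; omega
          have hBe : B - B' = 0 := eq_zero_of_sum_eq_zero
            (fun x hx => hBpos x (Multiset.mem_of_le (Multiset.sub_le_self _ _) hx))
            (by have := sum_sub_of_le hB'; omega)
          exact hdone ⟨hc, hBe⟩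
        obtain ⟨x, hx⟩ := Multiset.exists_mem_of_ne_zero hAne
        have hxA : x ∈ A := Multiset.mem_of_le (Multiset.sub_le_self _ _) hx
        have hxpos : 0 < x := hApos x hxA
        have hxmax : x ≤ msetMax A := le_msetMax hxA
        set A'' := x ::ₘ A' with hA''def
        have hA''le : A'' ≤ A := by
          have h1 : {x} ≤ A - A' := Multiset.singleton_le.mpr hx
          calc A'' = {x} + A' := by simp [hA''def, Multiset.singleton_add]
          _ ≤ (A - A') + A' := add_le_add_left h1 _
          _ = A := tsub_add_cancel_of_le hA'
        set d'' : ℤ := (A''.sum : ℤ) - B'.sum with hd''def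
        have hsumA'' : A''.sum = x + A'.sum := by simp [hA''def]
        have hd''sum : d'' = ((A'.sum : ℤ) - B'.sum) + x := by
          rw [hd''def, hsumA'']; push_cast; ring
        have hx1 : (1 : ℤ) ≤ x := by exact_mod_cast hxpos
        have hx2 : (x : ℤ) ≤ msetMax A := by exact_mod_cast hxmax
        have hd''I : d'' ∈ Finset.Icc (1 - (msetMax B : ℤ)) (msetMax A) := by
          simp only [Finset.mem_Icc]
          omega
        have hd''V : d'' ∉ V := by
          intro hc
          obtain ⟨Av, Bv, hAv, hBv, hwne, hweq⟩ := hVwit d'' hc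
          have hAvle : Av ≤ A'' := le_trans hAv (Multiset.le_cons_self _ _)
          have hAvne : Av ≠ A'' := by
            intro hc'
            have := Multiset.card_le_card hAv
            rw [hc'] at this
            simp [hA''def] at this
          exact fresh A B A'' B' Av Bv ⟨hA0, hB0, hApos, hBpos, hsum, hirr⟩
            hA''le hB' hAvle hBv (Or.inl hAvne) hwne (by rw [hweq])
        apply ih A'' B' (insert d'' V) hA''le hB'
        · have hc1 : Multiset.card (A - A'') = Multiset.card A - Multiset.card A'' :=
            Multiset.card_sub hA''le
          have hc2 : Multiset.card (A - A') = Multiset.card A - Multiset.card A' :=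
            Multiset.card_sub hA'
          have hc3 : Multiset.card A'' = Multiset.card A' + 1 := by simp [hA''def]
          have hc4 : 0 < Multiset.card (A - A') := Multiset.card_pos.mpr hAne
          omega
        · rw [Finset.card_insert_of_notMem hd''V, hV]
          simp [hA''def]; ring
        · intro v hv
          rcases Finset.mem_insert.mp hv with hv | hv
          · exact ⟨A'', B', le_refl _, le_refl _,
              fun hc => by simp [hA''def] at hc, by rw [hv]⟩
          · obtain ⟨Av, Bv, h1, h2, h3, h4⟩ := hVwit v hv
            exact ⟨Av, Bv, le_trans h1 (Multiset.le_cons_self _ _), h2, h3, h4⟩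
        · intro v hv
          rcases Finset.mem_insert.mp hv with hv | hv
          · rw [hv]; exact hd''I
          · exact hVI v hv
        · exact hd''I
      · -- add an element of B
        push_neg at hd
        have hBne : B - B' ≠ 0 := by
          intro hc
          have hBe : B' = B := le_antisymm hB' (tsub_eq_zero_iff_le.mp hc)
          have hAle : A'.sum ≤ A.sum := by
            have := sum_sub_of_le hA'; omega
          rw [hBe, ← hsum] at hd
          omega
        obtain ⟨y, hy⟩ := Multiset.exists_mem_of_ne_zero hBne
        have hyB : y ∈ B := Multiset.mem_of_le (Multiset.sub_le_self _ _) hy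
        have hypos : 0 < y := hBpos y hyB
        have hymax : y ≤ msetMax B := le_msetMax hyB
        set B'' := y ::ₘ B' with hB''def
        have hB''le : B'' ≤ B := by
          have h1 : {y} ≤ B - B' := Multiset.singleton_le.mpr hy
          calc B'' = {y} + B' := by simp [hB''def, Multiset.singleton_add]
          _ ≤ (B - B') + B' := add_le_add_left h1 _
          _ = B := tsub_add_cancel_of_le hB'
        set d'' : ℤ := (A'.sum : ℤ) - B''.sum with hd''def
        have hsumB'' : B''.sum = y + B'.sum := by simp [hB''def]
        have hd''sum : d'' = ((A'.sum : ℤ) - B'.sum) - y := by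
          rw [hd''def, hsumB'']; push_cast; ring
        have hy1 : (1 : ℤ) ≤ y := by exact_mod_cast hypos
        have hy2 : (y : ℤ) ≤ msetMax B := by exact_mod_cast hymax
        have hd''I : d'' ∈ Finset.Icc (1 - (msetMax B : ℤ)) (msetMax A) := by
          simp only [Finset.mem_Icc]
          omega
        have hd''V : d'' ∉ V := by
          intro hc
          obtain ⟨Av, Bv, hAv, hBv, hwne, hweq⟩ := hVwit d'' hc
          have hBvle : Bv ≤ B'' := le_trans hBv (Multiset.le_cons_self _ _)
          have hBvne : Bv ≠ B'' := by
            intro hc'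
            have := Multiset.card_le_card hBv
            rw [hc'] at this
            simp [hB''def] at this
          exact fresh A B A' B'' Av Bv ⟨hA0, hB0, hApos, hBpos, hsum, hirr⟩
            (le_trans hA' (le_refl A)) hB''le hAv hBvle (Or.inr hBvne) hwne (by rw [hweq])
        apply ih A' B'' (insert d'' V) hA' hB''le
        · have hc1 : Multiset.card (B - B'') = Multiset.card B - Multiset.card B'' :=
            Multiset.card_sub hB''le
          have hc2 : Multiset.card (B - B') = Multiset.card B - Multiset.card B' :=
            Multiset.card_sub hB'
          have hc3 : Multiset.card B'' = Multiset.card B' + 1 := by simp [hB''def]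
          have hc4 : 0 < Multiset.card (B - B') := Multiset.card_pos.mpr hBne
          omega
        · rw [Finset.card_insert_of_notMem hd''V, hV]
          simp [hB''def]; ring
        · intro v hv
          rcases Finset.mem_insert.mp hv with hv | hv
          · exact ⟨A', B'', le_refl _, le_refl _,
              fun hc => by simp [hB''def] at hc, by rw [hv]⟩
          · obtain ⟨Av, Bv, h1, h2, h3, h4⟩ := hVwit v hv
            exact ⟨Av, Bv, h1, le_trans h2 (Multiset.le_cons_self _ _), h3, h4⟩
        · intro v hv
          rcases Finset.mem_insert.mp hv with hv | hv
          · rw [hv]; exact hd''I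
          · exact hVI v hv
        · exact hd''I

theorem stmt16 (A B : Multiset ℕ) (h : IrredPair A B) :
    Multiset.card A + Multiset.card B ≤ msetMax A + msetMax B := by
  have hA0 := h.1
  have hB0 := h.2.1
  obtain ⟨x, hx⟩ := Multiset.exists_mem_of_ne_zero hA0
  obtain ⟨y, hy⟩ := Multiset.exists_mem_of_ne_zero hB0
  have ha : 1 ≤ msetMax A := le_trans (h.2.2.1 x hx) (le_msetMax hx)
  have hb : 1 ≤ msetMax B := le_trans (h.2.2.2.1 y hy) (le_msetMax hy)
  apply walk A B h (Multiset.card A + Multiset.card B) 0 0 ∅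
  · exact Multiset.zero_le A
  · exact Multiset.zero_le B
  · simp
  · simp
  · simp
  · simp
  · simp only [Multiset.sum_zero, Nat.cast_zero, sub_zero, sub_self, Finset.mem_Icc]
    constructor <;> [omega; positivity]
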